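/- Let 𝓜 = (m^{(1)} … m^{(r)}) be nonsingular and suppose |M_{r-1}(N; v)| ≤ (r-1)! e^{-π vᵀv} for all admissible (r-1)-dimensional data. Given the identity M_r(𝓜; u) = 2∑_{j=1}^r (m^{(j)T}u/‖m^{(j)}‖) ∫_1^∞ e^{-π t² (m^{(j)T}u)²/‖m^{(j)}‖²} M_{r-1}(P_j 𝓜_{[r]\{j}}; t P_j u) dt, it follows that |M_r(𝓜; u)| ≤ r! e^{-π uᵀu}, using |Q_{{j}}u| ≤ ‖u‖ and erfc(√(π uᵀu)) ≤ e^{-π uᵀu}. -/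

import Mathlib

open MeasureTheory Matrix

private lemma stmt19_shift_int (g : ℝ → ℝ) :
    ∫ t in Set.Ioi (1:ℝ), g (t - 1) = ∫ x in Set.Ioi (0:ℝ), g x := by
  rw [← integral_indicator measurableSet_Ioi, ← integral_indicator measurableSet_Ioi]
  rw [show (Set.Ioi (1:ℝ)).indicator (fun t => g (t - 1))
      = fun x => (Set.Ioi (0:ℝ)).indicator g (x + (-1)) from ?_]
  · exact integral_add_right_eq_self _ (-1)
  · funext x
    by_cases h : 1 < x
    · simp [Set.indicator_apply, h, show (0:ℝ) < x + (-1) by linarith, sub_eq_add_neg]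
    · simp [Set.indicator_apply, h, show ¬((0:ℝ) < x + (-1)) by intro hh; exact h (by linarith)]

private lemma stmt19_key_int {b : ℝ} (hb : 0 < b) :
    ∫ t in Set.Ioi (1:ℝ), Real.exp (-b * t ^ 2)
      ≤ Real.exp (-b) * (Real.sqrt (Real.pi / b) / 2) := by
  have hInt1 : IntegrableOn (fun t => Real.exp (-b * t ^ 2)) (Set.Ioi 1) :=
    (integrable_exp_neg_mul_sq hb).integrableOn
  have hInt2 : IntegrableOn (fun t => Real.exp (-b) * Real.exp (-b * (t - 1) ^ 2))
      (Set.Ioi 1) :=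
    (((integrable_exp_neg_mul_sq hb).comp_sub_right 1).const_mul _).integrableOn
  have hmono : ∫ t in Set.Ioi (1:ℝ), Real.exp (-b * t ^ 2)
      ≤ ∫ t in Set.Ioi (1:ℝ), Real.exp (-b) * Real.exp (-b * (t - 1) ^ 2) := by
    refine setIntegral_mono_on hInt1 hInt2 measurableSet_Ioi ?_
    intro t ht
    rw [← Real.exp_add]
    apply Real.exp_le_exp.2
    have ht' : (1:ℝ) < t := ht
    nlinarith
  refine hmono.trans ?_
  rw [integral_const_mul]
  rw [stmt19_shift_int (fun x => Real.exp (-b * x ^ 2)), integral_gaussian_Ioi]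

/-- The inductive step for the uniform bound `|M_r(𝓜;u)| ≤ r! e^{-π uᵀu}`:
given the bound `|M_{r-1}(Pⱼ𝓜_{[r]∖{j}}; t Pⱼu)| ≤ (r-1)! e^{-π t²‖Pⱼu‖²}` and
the integral identity
`M_r(𝓜;u) = 2∑ⱼ (m⁽ʲ⁾ᵀu/‖m⁽ʲ⁾‖) ∫₁^∞ e^{-πt²(m⁽ʲ⁾ᵀu)²/‖m⁽ʲ⁾‖²} M_{r-1}(…;tPⱼu) dt`,
it follows that `|M_r(𝓜;u)| ≤ r! e^{-π uᵀu}`. Here `r = n + 1`, the rows of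
`Pⱼ` form an orthonormal basis of the hyperplane orthogonal to the `j`-th
column `m⁽ʲ⁾` of `𝓜`. -/
theorem stmt_19 {n : ℕ} (M : Matrix (Fin (n + 1)) (Fin (n + 1)) ℝ)
    (hM : IsUnit M.det) (u : Fin (n + 1) → ℝ)
    (P : Fin (n + 1) → Matrix (Fin n) (Fin (n + 1)) ℝ)
    (hPorth : ∀ j, P j * (P j)ᵀ = 1)
    (hPm : ∀ j, (P j).mulVec (fun i => M i j) = 0)
    (hPproj : ∀ j, (P j)ᵀ * P j =
      1 - Matrix.of (fun a b => M a j * M b j / (∑ i, M i j ^ 2)))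
    (Mr : ℝ) (Mprev : Fin (n + 1) → ℝ → ℝ)
    (hbound : ∀ j t, |Mprev j t| ≤
      (Nat.factorial n : ℝ) * Real.exp (-Real.pi * ∑ i, (t * (P j).mulVec u i) ^ 2))
    (hidentity : Mr = 2 * ∑ j, ((∑ i, M i j * u i) / Real.sqrt (∑ i, M i j ^ 2)) *
      ∫ t in Set.Ioi (1 : ℝ),
        Real.exp (-Real.pi * t ^ 2 * (∑ i, M i j * u i) ^ 2 / (∑ i, M i j ^ 2)) *
          Mprev j t) :
    |Mr| ≤ (Nat.factorial (n + 1) : ℝ) * Real.exp (-Real.pi * ∑ i, u i ^ 2) := by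
  -- column norms are positive
  have hs : ∀ j, (0:ℝ) < ∑ i, M i j ^ 2 := by
    intro j
    rcases (Finset.sum_nonneg fun i _ => sq_nonneg (M i j)).lt_or_eq with h | h
    · exact h
    · exfalso
      have hz : ∀ i, M i j = 0 := by
        intro i
        have := (Finset.sum_eq_zero_iff_of_nonneg
          (fun i _ => sq_nonneg (M i j))).1 h.symm i (Finset.mem_univ i)
        exact pow_eq_zero_iff (two_ne_zero) |>.1 this
      rw [Matrix.det_eq_zero_of_column_eq_zero j hz] at hM
      simp at hM
  set a2 : ℝ := ∑ i, u i ^ 2 with ha2_def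
  have ha2nn : 0 ≤ a2 := Finset.sum_nonneg fun i _ => sq_nonneg (u i)
  by_cases hu : a2 = 0
  · -- u = 0, each coefficient vanishes
    have hsum0 : (∑ i, u i ^ 2) = 0 := by rw [← ha2_def]; exact hu
    have hu0 : ∀ i, u i = 0 := by
      intro i
      have := (Finset.sum_eq_zero_iff_of_nonneg
        (fun i _ => sq_nonneg (u i))).1 hsum0 i (Finset.mem_univ i)
      exact pow_eq_zero_iff (two_ne_zero) |>.1 this
    have hc0 : ∀ j, (∑ i, M i j * u i) = 0 := by
      intro j; simp [hu0]
    rw [hidentity]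
    simp only [hc0, zero_div, zero_mul, Finset.sum_const_zero, mul_zero, abs_zero]
    positivity
  · have ha2pos : 0 < a2 := lt_of_le_of_ne ha2nn (Ne.symm hu)
    have haspos : 0 < Real.sqrt a2 := Real.sqrt_pos.2 ha2pos
    -- bound for each summand
    have hterm : ∀ j : Fin (n + 1),
        |((∑ i, M i j * u i) / Real.sqrt (∑ i, M i j ^ 2)) *
          ∫ t in Set.Ioi (1 : ℝ),
            Real.exp (-Real.pi * t ^ 2 * (∑ i, M i j * u i) ^ 2 / (∑ i, M i j ^ 2)) *
              Mprev j t|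
          ≤ (Nat.factorial n : ℝ) * Real.exp (-Real.pi * a2) / 2 := by
      intro j
      set c : ℝ := ∑ i, M i j * u i with hc_def
      set sj : ℝ := ∑ i, M i j ^ 2 with hsj_def
      have hsj : 0 < sj := hs j
      -- ‖P j u‖²
      have hPu : ∑ i, ((P j).mulVec u i) ^ 2 = a2 - c ^ 2 / sj := by
        have h1 : ∑ i, ((P j).mulVec u i) ^ 2 = u ⬝ᵥ (((P j)ᵀ * P j).mulVec u) := by
          rw [← Matrix.mulVec_mulVec, Matrix.dotProduct_mulVec, Matrix.vecMul_transpose]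
          simp [dotProduct, sq]
        rw [h1, hPproj j, Matrix.sub_mulVec, Matrix.one_mulVec, dotProduct_sub]
        congr 1
        · simp [ha2_def, dotProduct, sq]
        · simp only [Matrix.mulVec, dotProduct, Matrix.of_apply]
          obtain ⟨s, hs_eq, hs'⟩ : ∃ s : ℝ, (∑ i, M i j ^ 2) = s ∧ 0 < s := ⟨_, rfl, hs j⟩
          rw [hc_def, hsj_def, hs_eq]
          rw [eq_div_iff hs'.ne', sq, Finset.sum_mul_sum, Finset.sum_mul]
          refine Finset.sum_congr rfl fun a _ => ?_
          rw [Finset.mul_sum, Finset.sum_mul]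
          refine Finset.sum_congr rfl fun b _ => ?_
          field_simp
      -- Cauchy–Schwarz
      have hcs : c ^ 2 ≤ sj * a2 := by
        simpa [hc_def, hsj_def, ha2_def] using
          Finset.sum_mul_sq_le_sq_mul_sq Finset.univ (fun i => M i j) u
      have habs : |c / Real.sqrt sj| ≤ Real.sqrt a2 := by
        rw [abs_div, abs_of_nonneg (Real.sqrt_nonneg sj), div_le_iff₀ (Real.sqrt_pos.2 hsj)]
        rw [← Real.sqrt_sq_eq_abs, ← Real.sqrt_mul ha2nn]
        exact Real.sqrt_le_sqrt (by nlinarith)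
      -- bound on the integral
      have hIbound : |∫ t in Set.Ioi (1 : ℝ),
          Real.exp (-Real.pi * t ^ 2 * c ^ 2 / sj) * Mprev j t|
          ≤ (Nat.factorial n : ℝ) *
            (Real.exp (-(Real.pi * a2)) * (Real.sqrt (Real.pi / (Real.pi * a2)) / 2)) := by
        have hb : (0:ℝ) < Real.pi * a2 := by positivity
        have hgInt : IntegrableOn
            (fun t => (Nat.factorial n : ℝ) * Real.exp (-(Real.pi * a2) * t ^ 2))
            (Set.Ioi (1:ℝ)) :=
          ((integrable_exp_neg_mul_sq hb).const_mul _).integrableOn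
        have hptwise : ∀ t : ℝ,
            ‖Real.exp (-Real.pi * t ^ 2 * c ^ 2 / sj) * Mprev j t‖
            ≤ (Nat.factorial n : ℝ) * Real.exp (-(Real.pi * a2) * t ^ 2) := by
          intro t
          rw [Real.norm_eq_abs, abs_mul, abs_of_nonneg (Real.exp_nonneg _)]
          calc Real.exp (-Real.pi * t ^ 2 * c ^ 2 / sj) * |Mprev j t|
              ≤ Real.exp (-Real.pi * t ^ 2 * c ^ 2 / sj) *
                ((Nat.factorial n : ℝ) *
                  Real.exp (-Real.pi * ∑ i, (t * (P j).mulVec u i) ^ 2)) := by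
                exact mul_le_mul_of_nonneg_left (hbound j t) (Real.exp_nonneg _)
            _ = (Nat.factorial n : ℝ) * Real.exp (-(Real.pi * a2) * t ^ 2) := by
                have hsum : (∑ i, (t * (P j).mulVec u i) ^ 2)
                    = t ^ 2 * (a2 - c ^ 2 / sj) := by
                  rw [← hPu, Finset.mul_sum]
                  exact Finset.sum_congr rfl fun i _ => by ring
                rw [hsum, ← mul_assoc, mul_comm _ ((Nat.factorial n : ℝ)), mul_assoc,
                  ← Real.exp_add]
                congr 1
                congr 1
                ring
        calc |∫ t in Set.Ioi (1 : ℝ),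
              Real.exp (-Real.pi * t ^ 2 * c ^ 2 / sj) * Mprev j t|
            ≤ ∫ t in Set.Ioi (1 : ℝ),
              (Nat.factorial n : ℝ) * Real.exp (-(Real.pi * a2) * t ^ 2) := by
              rw [← Real.norm_eq_abs]
              exact norm_integral_le_of_norm_le hgInt
                (Filter.Eventually.of_forall fun t => hptwise t)
          _ ≤ (Nat.factorial n : ℝ) *
              (Real.exp (-(Real.pi * a2)) * (Real.sqrt (Real.pi / (Real.pi * a2)) / 2)) := by
              rw [integral_const_mul]
              exact mul_le_mul_of_nonneg_left (stmt19_key_int hb)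
                (Nat.cast_nonneg _)
      -- combine
      have hsqrt : Real.sqrt (Real.pi / (Real.pi * a2)) = 1 / Real.sqrt a2 := by
        rw [show Real.pi / (Real.pi * a2) = 1 / a2 by
          field_simp]
        rw [one_div, Real.sqrt_inv, one_div]
      rw [abs_mul]
      calc |c / Real.sqrt sj| * |∫ t in Set.Ioi (1 : ℝ),
            Real.exp (-Real.pi * t ^ 2 * c ^ 2 / sj) * Mprev j t|
          ≤ Real.sqrt a2 * ((Nat.factorial n : ℝ) *
            (Real.exp (-(Real.pi * a2)) * (Real.sqrt (Real.pi / (Real.pi * a2)) / 2))) := by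
            exact mul_le_mul habs hIbound (abs_nonneg _) (Real.sqrt_nonneg _)
        _ = (Nat.factorial n : ℝ) * Real.exp (-Real.pi * a2) / 2 := by
            rw [hsqrt]
            field_simp
    -- sum it all up
    rw [hidentity, abs_mul, abs_two]
    calc 2 * |∑ j, ((∑ i, M i j * u i) / Real.sqrt (∑ i, M i j ^ 2)) *
          ∫ t in Set.Ioi (1 : ℝ),
            Real.exp (-Real.pi * t ^ 2 * (∑ i, M i j * u i) ^ 2 / (∑ i, M i j ^ 2)) *
              Mprev j t|
        ≤ 2 * ∑ j, |((∑ i, M i j * u i) / Real.sqrt (∑ i, M i j ^ 2)) *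
          ∫ t in Set.Ioi (1 : ℝ),
            Real.exp (-Real.pi * t ^ 2 * (∑ i, M i j * u i) ^ 2 / (∑ i, M i j ^ 2)) *
              Mprev j t| := by
          exact mul_le_mul_of_nonneg_left (Finset.abs_sum_le_sum_abs _ _) two_pos.le
      _ ≤ 2 * ∑ _j : Fin (n + 1), (Nat.factorial n : ℝ) * Real.exp (-Real.pi * a2) / 2 := by
          exact mul_le_mul_of_nonneg_left
            (Finset.sum_le_sum fun j _ => hterm j) two_pos.le
      _ = (Nat.factorial (n + 1) : ℝ) * Real.exp (-Real.pi * a2) := by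
          rw [Finset.sum_const, Finset.card_univ, Fintype.card_fin, Nat.factorial_succ]
          push_cast
          ring
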